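/- arXiv:2502.01512 — 2 statements merged into one kernel-verified Lean document; each statement's English description precedes it below -/
import Mathlib

section
/- For a diagonal matrix u = diag(λ₁,…,λ_d), the directional derivative of the matrix exponential in direction h (symmetric) has (i,j) entry equal to (e^{λ_i} − e^{λ_j})/(λ_i − λ_j) · h_{ij} when λ_i ≠ λ_j, and e^{λ_i} h_{ij} when λ_i = λ_j (Daletskii–Krein formula, diagonal case). -/
open Matrix Finset Nat

attribute [local instance] Matrix.frobeniusNormedAddCommGroup Matrix.frobeniusNormedSpace
attribute [local instance] Matrix.frobeniusNormedRing Matrix.frobeniusNormedAlgebra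

section Aux

variable {A : Type*} [NormedRing A] [NormedAlgebra ℝ A]

lemma dk_norm_pow_mul_le (g x : A) (k : ℕ) : ‖g ^ k * x‖ ≤ ‖g‖ ^ k * ‖x‖ := by
  induction k with
  | zero => simp
  | succ k ih =>
    calc ‖g ^ (k+1) * x‖ = ‖g * (g ^ k * x)‖ := by rw [_root_.pow_succ', mul_assoc]
    _ ≤ ‖g‖ * ‖g ^ k * x‖ := norm_mul_le _ _
    _ ≤ ‖g‖ * (‖g‖ ^ k * ‖x‖) := by
        have := norm_nonneg g
        exact mul_le_mul_of_nonneg_left ih this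
    _ = ‖g‖ ^ (k+1) * ‖x‖ := by ring

lemma dk_norm_mul_pow_le (g x : A) (k : ℕ) : ‖x * g ^ k‖ ≤ ‖x‖ * ‖g‖ ^ k := by
  induction k with
  | zero => simp
  | succ k ih =>
    calc ‖x * g ^ (k+1)‖ = ‖x * g ^ k * g‖ := by rw [_root_.pow_succ, mul_assoc]
    _ ≤ ‖x * g ^ k‖ * ‖g‖ := norm_mul_le _ _
    _ ≤ ‖x‖ * ‖g‖ ^ k * ‖g‖ :=
        mul_le_mul_of_nonneg_right ih (norm_nonneg g)
    _ = ‖x‖ * ‖g‖ ^ (k+1) := by ring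

lemma dk_hasDerivAt_pow (u h : A) (n : ℕ) (t : ℝ) :
    HasDerivAt (fun s : ℝ => (u + s • h) ^ n)
      (∑ k ∈ range n, (u + t • h) ^ k * h * (u + t • h) ^ (n - 1 - k)) t := by
  induction n with
  | zero => simpa using hasDerivAt_const t (1 : A)
  | succ n ih =>
    have hbase : HasDerivAt (fun s : ℝ => u + s • h) h t := by
      simpa using ((hasDerivAt_id t).smul_const h).const_add u
    have := ih.mul hbase
    have hsum : (∑ k ∈ range n, (u + t • h) ^ k * h * (u + t • h) ^ (n - 1 - k)) * (u + t • h)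
        + (u + t • h) ^ n * h
        = ∑ k ∈ range (n+1), (u + t • h) ^ k * h * (u + t • h) ^ (n + 1 - 1 - k) := by
      rw [Finset.sum_range_succ, Finset.sum_mul]
      simp only [Nat.add_sub_cancel, Nat.sub_self, pow_zero, mul_one]
      congr 1
      refine Finset.sum_congr rfl fun k hk => ?_
      rw [Finset.mem_range] at hk
      rw [mul_assoc, ← pow_succ]
      congr 2
      omega
    simp only [pow_succ]
    rw [← hsum]
    exact this

end Aux

lemma dk_summable_aux (x : ℝ) : Summable fun n : ℕ => (n ! : ℝ)⁻¹ * (n * x ^ (n - 1)) := by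
  rw [← summable_nat_add_iff 1]
  refine (Real.summable_pow_div_factorial x).congr fun n => ?_
  rw [Nat.factorial_succ, Nat.add_sub_cancel]
  have h1 : (n ! : ℝ) ≠ 0 := Nat.cast_ne_zero.2 n.factorial_ne_zero
  push_cast
  field_simp

lemma dk_tsum_aux (x : ℝ) : ∑' n : ℕ, (n ! : ℝ)⁻¹ * (n * x ^ (n - 1)) = Real.exp x := by
  rw [Summable.tsum_eq_zero_add (dk_summable_aux x)]
  simp only [Nat.factorial_zero, Nat.cast_zero, zero_mul, mul_zero, zero_add]
  have : ∀ n : ℕ, ((n + 1)! : ℝ)⁻¹ * ((n + 1 : ℕ) * x ^ (n + 1 - 1)) = x ^ n / n ! := by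
    intro n
    rw [Nat.factorial_succ, Nat.add_sub_cancel]
    have h1 : (n ! : ℝ) ≠ 0 := Nat.cast_ne_zero.2 n.factorial_ne_zero
    push_cast
    field_simp
  rw [tsum_congr this, Real.exp_eq_exp_ℝ, NormedSpace.exp_eq_tsum_div]

/-- Daletskii–Krein formula, diagonal case: for u = diag(λ₁,…,λ_d) and h symmetric,
the directional derivative of the matrix exponential at u in direction h has (i,j)
entry (e^{λ_i} − e^{λ_j})/(λ_i − λ_j) · h_{ij} when λ_i ≠ λ_j and e^{λ_i} h_{ij}
when λ_i = λ_j. -/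
theorem daletskii_krein_diagonal (d : ℕ) (lam : Fin d → ℝ)
    (h : Matrix (Fin d) (Fin d) ℝ) (hh : h.IsSymm) :
    HasDerivAt (fun t : ℝ => NormedSpace.exp (Matrix.diagonal lam + t • h))
      (Matrix.of fun i j =>
        if lam i = lam j then Real.exp (lam i) * h i j
        else ((Real.exp (lam i) - Real.exp (lam j)) / (lam i - lam j)) * h i j) 0 := by
  set u : Matrix (Fin d) (Fin d) ℝ := Matrix.diagonal lam with hu
  set R : ℝ := ‖u‖ + ‖h‖ with hR
  have hR0 : 0 ≤ R := add_nonneg (norm_nonneg _) (norm_nonneg _)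
  set f : ℕ → ℝ → Matrix (Fin d) (Fin d) ℝ :=
    fun n t => (n ! : ℝ)⁻¹ • (u + t • h) ^ n with hf
  set f' : ℕ → ℝ → Matrix (Fin d) (Fin d) ℝ :=
    fun n t => (n ! : ℝ)⁻¹ • ∑ k ∈ range n, (u + t • h) ^ k * h * (u + t • h) ^ (n - 1 - k)
    with hf'
  set bnd : ℕ → ℝ := fun n => (n ! : ℝ)⁻¹ * (n * (‖h‖ * R ^ (n - 1))) with hbnd
  -- summability of the bound
  have hbnds : Summable bnd := by
    have := (dk_summable_aux R).mul_left ‖h‖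
    refine this.congr fun n => ?_
    simp only [hbnd]; ring
  -- derivative of each term
  have hderiv : ∀ (n : ℕ) (t : ℝ), t ∈ Metric.ball (0:ℝ) 1 → HasDerivAt (f n) (f' n t) t :=
    fun n t _ => (dk_hasDerivAt_pow u h n t).const_smul ((n ! : ℝ)⁻¹)
  -- bound on derivatives
  have hbound : ∀ (n : ℕ) (t : ℝ), t ∈ Metric.ball (0:ℝ) 1 → ‖f' n t‖ ≤ bnd n := by
    intro n t ht
    have hgt : ‖u + t • h‖ ≤ R := by
      rw [Metric.mem_ball, Real.dist_eq, sub_zero] at ht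
      calc ‖u + t • h‖ ≤ ‖u‖ + ‖t • h‖ := norm_add_le _ _
      _ = ‖u‖ + |t| * ‖h‖ := by rw [norm_smul, Real.norm_eq_abs]
      _ ≤ ‖u‖ + 1 * ‖h‖ := by
          have ht1 : |t| ≤ 1 := ht.le
          gcongr
      _ = R := by rw [one_mul]
    have hterm : ∀ k ∈ range n, ‖(u + t • h) ^ k * h * (u + t • h) ^ (n - 1 - k)‖
        ≤ ‖h‖ * R ^ (n - 1) := by
      intro k hk
      rw [Finset.mem_range] at hk
      calc ‖(u + t • h) ^ k * h * (u + t • h) ^ (n - 1 - k)‖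
          ≤ ‖(u + t • h) ^ k * h‖ * ‖u + t • h‖ ^ (n - 1 - k) := dk_norm_mul_pow_le _ _ _
        _ ≤ (‖u + t • h‖ ^ k * ‖h‖) * ‖u + t • h‖ ^ (n - 1 - k) :=
            mul_le_mul_of_nonneg_right (dk_norm_pow_mul_le _ _ _) (by positivity)
        _ = ‖h‖ * ‖u + t • h‖ ^ (k + (n - 1 - k)) := by rw [pow_add]; ring
        _ = ‖h‖ * ‖u + t • h‖ ^ (n - 1) := by congr 2; omega
        _ ≤ ‖h‖ * R ^ (n - 1) := by gcongr

    calc ‖f' n t‖ = (n ! : ℝ)⁻¹ * ‖∑ k ∈ range n, (u + t • h) ^ k * h * (u + t • h) ^ (n-1-k)‖ := by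
          rw [hf', norm_smul, Real.norm_eq_abs, abs_of_nonneg (by positivity)]
      _ ≤ (n ! : ℝ)⁻¹ * (n * (‖h‖ * R ^ (n - 1))) := by
          refine mul_le_mul_of_nonneg_left ?_ (by positivity)
          calc ‖∑ k ∈ range n, (u + t • h) ^ k * h * (u + t • h) ^ (n-1-k)‖
                ≤ ∑ k ∈ range n, ‖(u + t • h) ^ k * h * (u + t • h) ^ (n-1-k)‖ :=
                  norm_sum_le _ _
              _ ≤ ∑ _k ∈ range n, ‖h‖ * R ^ (n - 1) := Finset.sum_le_sum hterm
              _ = n * (‖h‖ * R ^ (n - 1)) := by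
                  rw [Finset.sum_const, Finset.card_range, nsmul_eq_mul]
      _ = bnd n := rfl
  -- convergence at 0
  have hsum0 : Summable fun n => f n 0 := by
    have := NormedSpace.expSeries_summable' (𝕂 := ℝ) u
    refine this.congr fun n => ?_
    simp [hf]
  have key := hasDerivAt_tsum_of_isPreconnected hbnds Metric.isOpen_ball
    (convex_ball (0:ℝ) 1).isPreconnected hderiv hbound (Metric.mem_ball_self one_pos) hsum0
    (Metric.mem_ball_self one_pos)
  have hfun : (fun z : ℝ => ∑' n, f n z) = fun t : ℝ => NormedSpace.exp (u + t • h) := by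
    funext z
    rw [NormedSpace.exp_eq_tsum (𝕂 := ℝ)]
  rw [← hfun]
  refine key.congr_deriv (Eq.symm ?_)
  -- now identify the derivative
  have hsumf' : Summable fun n => f' n 0 :=
    Summable.of_norm_bounded hbnds fun n => hbound n 0 (Metric.mem_ball_self one_pos)
  ext i j
  let E : Matrix (Fin d) (Fin d) ℝ →L[ℝ] ℝ :=
    LinearMap.toContinuousLinearMap
      { toFun := fun M => M i j, map_add' := fun _ _ => rfl, map_smul' := fun _ _ => rfl }
  have hts : (∑' n, f' n 0) i j = ∑' n, (f' n 0) i j :=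
    calc (∑' n, f' n 0) i j = E (∑' n, f' n 0) := rfl
      _ = ∑' n, E (f' n 0) := E.map_tsum hsumf'
      _ = ∑' n, (f' n 0) i j := rfl
  refine Eq.trans ?_ hts.symm
  have hentry : ∀ n : ℕ, (f' n 0) i j
      = ((n ! : ℝ)⁻¹ * ∑ k ∈ range n, lam i ^ k * lam j ^ (n - 1 - k)) * h i j := by
    intro n
    simp only [hf', zero_smul, add_zero, Matrix.smul_apply, smul_eq_mul]
    rw [Matrix.sum_apply]
    have hterm : ∀ k ∈ range n,
        ((u : Matrix (Fin d) (Fin d) ℝ) ^ k * h * u ^ (n - 1 - k)) i j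
          = lam i ^ k * lam j ^ (n - 1 - k) * h i j := by
      intro k _
      rw [hu, Matrix.diagonal_pow, Matrix.diagonal_pow, Matrix.mul_diagonal,
        Matrix.diagonal_mul]
      simp only [Pi.pow_apply]
      ring
    rw [Finset.sum_congr rfl hterm, ← Finset.sum_mul]
    ring
  rw [tsum_congr hentry, tsum_mul_right, Matrix.of_apply]
  by_cases hij : lam i = lam j
  · rw [if_pos hij]
    simp only [hij]
    have hc : ∀ n : ℕ, (n ! : ℝ)⁻¹ * ∑ k ∈ range n, lam j ^ k * lam j ^ (n - 1 - k)
        = (n ! : ℝ)⁻¹ * (n * lam j ^ (n - 1)) := by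
      intro n
      congr 1
      have : ∀ k ∈ range n, lam j ^ k * lam j ^ (n - 1 - k) = lam j ^ (n - 1) := by
        intro k hk
        rw [← pow_add]
        congr 1
        have := Finset.mem_range.1 hk
        omega
      rw [Finset.sum_congr rfl this, Finset.sum_const, Finset.card_range, nsmul_eq_mul]
    rw [tsum_congr hc, dk_tsum_aux]
  · rw [if_neg hij]
    have hxy : lam i - lam j ≠ 0 := sub_ne_zero.2 hij
    have hS : ∀ n : ℕ, (n ! : ℝ)⁻¹ * ∑ k ∈ range n, lam i ^ k * lam j ^ (n - 1 - k)
        = (lam i ^ n / (n ! : ℝ) - lam j ^ n / (n ! : ℝ)) * (lam i - lam j)⁻¹ := by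
      intro n
      have hg : ∑ k ∈ range n, lam i ^ k * lam j ^ (n - 1 - k)
          = (lam i ^ n - lam j ^ n) / (lam i - lam j) := by
        rw [eq_div_iff hxy]
        exact geom_sum₂_mul (lam i) (lam j) n
      have hn : (n ! : ℝ) ≠ 0 := Nat.cast_ne_zero.2 n.factorial_ne_zero
      rw [hg]
      simp only [div_eq_mul_inv]
      ring
    rw [tsum_congr hS, tsum_mul_right,
      Summable.tsum_sub (Real.summable_pow_div_factorial (lam i))
        (Real.summable_pow_div_factorial (lam j))]
    have hx : ∀ y : ℝ, ∑' n : ℕ, y ^ n / (n ! : ℝ) = Real.exp y := by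
      intro y
      rw [Real.exp_eq_exp_ℝ, NormedSpace.exp_eq_tsum_div]
    rw [hx, hx, div_eq_mul_inv]
end

section
/- For p ∈ P_d, x ∈ P_d and t ∈ ℝ, the vectorized logarithm satisfies Vect_{e^t p}(Log_{e^t p}(x)) = Vect_p(Log_p(x)) − t ν, where ν = Vect_p(p) = (1,…,1,0,…,0) with d ones followed by zeros. -/
open Matrix

/-- Matrix logarithm via spectral decomposition (junk value 0 off Hermitian matrices). -/
noncomputable def mlog {d : ℕ} (A : Matrix (Fin d) (Fin d) ℝ) : Matrix (Fin d) (Fin d) ℝ :=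
  if h : A.IsHermitian then
    (h.eigenvectorUnitary : Matrix (Fin d) (Fin d) ℝ) *
      Matrix.diagonal (Real.log ∘ h.eigenvalues) *
      star (h.eigenvectorUnitary : Matrix (Fin d) (Fin d) ℝ)
  else 0

/-- The positive semidefinite square root (Mathlib's former `Matrix.PosSemidef.sqrt`, restored
verbatim since it was removed from Mathlib). -/
noncomputable def Matrix.PosSemidef.sqrt {n 𝕜 : Type*} [Fintype n] [DecidableEq n] [RCLike 𝕜]
    [PartialOrder 𝕜] {A : Matrix n n 𝕜} (hA : A.PosSemidef) : Matrix n n 𝕜 :=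
  hA.1.eigenvectorUnitary.1 * diagonal ((↑) ∘ (√·) ∘ hA.1.eigenvalues) *
  (star hA.1.eigenvectorUnitary : Matrix n n 𝕜)

open scoped MatrixOrder in
lemma Matrix.PosSemidef.sqrt_eq_cfcSqrt {d : ℕ} {A : Matrix (Fin d) (Fin d) ℝ}
    (hA : A.PosSemidef) : hA.sqrt = CFC.sqrt A := by
  rw [CFC.sqrt_eq_cfc, cfc_nnreal_eq_real _ A, hA.1.cfc_eq, Matrix.IsHermitian.cfc,
    Matrix.PosSemidef.sqrt]
  congr 3
  ext i
  simp [hA.eigenvalues_nonneg i]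

open scoped MatrixOrder in
lemma Matrix.PosSemidef.posSemidef_sqrt {d : ℕ} {A : Matrix (Fin d) (Fin d) ℝ}
    (hA : A.PosSemidef) : hA.sqrt.PosSemidef := by
  rw [hA.sqrt_eq_cfcSqrt]
  exact (CFC.sqrt_nonneg A).posSemidef

open scoped MatrixOrder in
lemma Matrix.PosSemidef.sqrt_mul_self {d : ℕ} {A : Matrix (Fin d) (Fin d) ℝ}
    (hA : A.PosSemidef) : hA.sqrt * hA.sqrt = A := by
  rw [hA.sqrt_eq_cfcSqrt]
  exact CFC.sqrt_mul_sqrt_self A hA.nonneg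

open scoped MatrixOrder in
lemma Matrix.PosSemidef.eq_sqrt_of_sq_eq {d : ℕ} {A B : Matrix (Fin d) (Fin d) ℝ}
    (hB : B.PosSemidef) (hA : A.PosSemidef) (h : B ^ 2 = A) : B = hA.sqrt := by
  rw [hA.sqrt_eq_cfcSqrt]
  exact ((CFC.sqrt_eq_iff _ _ hA.nonneg hB.nonneg).mpr (by rw [← sq]; exact h)).symm

/-- The Riemannian logarithm map Log_p(x) = p^{1/2} log(p^{-1/2} x p^{-1/2}) p^{1/2}. -/
noncomputable def LogM {d : ℕ} (p : Matrix (Fin d) (Fin d) ℝ) (hp : p.PosDef)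
    (x : Matrix (Fin d) (Fin d) ℝ) : Matrix (Fin d) (Fin d) ℝ :=
  hp.posSemidef.sqrt * mlog (hp.posSemidef.sqrt⁻¹ * x * hp.posSemidef.sqrt⁻¹) *
    hp.posSemidef.sqrt

/-- Index type of size d(d+1)/2 : pairs (i,j) with i ≤ j. -/
abbrev Idx (d : ℕ) := {q : Fin d × Fin d // q.1 ≤ q.2}

/-- Vectorization at the identity. -/
noncomputable def VectI {d : ℕ} (u : Matrix (Fin d) (Fin d) ℝ) : Idx d → ℝ :=
  fun q => if q.1.1 = q.1.2 then u q.1.1 q.1.2 else Real.sqrt 2 * u q.1.1 q.1.2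

/-- Vectorization at p. -/
noncomputable def VectP {d : ℕ} (p : Matrix (Fin d) (Fin d) ℝ) (hp : p.PosDef)
    (u : Matrix (Fin d) (Fin d) ℝ) : Idx d → ℝ :=
  VectI (hp.posSemidef.sqrt⁻¹ * u * hp.posSemidef.sqrt⁻¹)

lemma mlog_eq_cfc {d : ℕ} {A : Matrix (Fin d) (Fin d) ℝ} (hA : A.IsHermitian) :
    mlog A = cfc Real.log A := by
  rw [hA.cfc_eq, Matrix.IsHermitian.cfc, mlog, dif_pos hA]
  simp [Function.comp_def]

lemma posDef_conj {d : ℕ} {x B : Matrix (Fin d) (Fin d) ℝ} (hx : x.PosDef)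
    (hB : IsUnit B.det) : (Bᴴ * x * B).PosDef := by
  exact hx.conjTranspose_mul_mul_same
    (Matrix.mulVec_injective_iff_isUnit.mpr ((Matrix.isUnit_iff_isUnit_det B).2 hB))

lemma mlog_smul {d : ℕ} {M : Matrix (Fin d) (Fin d) ℝ} (hM : M.PosDef) {c : ℝ} (hc : 0 < c) :
    mlog (c • M) = Real.log c • (1 : Matrix (Fin d) (Fin d) ℝ) + mlog M := by
  have hM1 : M.IsHermitian := hM.1
  have hsa : IsSelfAdjoint M := hM1
  have hcM : (c • M).IsHermitian := by
    rw [Matrix.IsHermitian, Matrix.conjTranspose_smul, star_trivial, hM1.eq]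
  have hsp : ∀ y ∈ spectrum ℝ M, 0 < y := by
    intro y hy
    rw [hM1.spectrum_real_eq_range_eigenvalues] at hy
    obtain ⟨i, rfl⟩ := hy
    exact hM.eigenvalues_pos i
  rw [mlog_eq_cfc hcM, mlog_eq_cfc hM1]
  have h1 : cfc Real.log (c • M) = cfc (fun y => Real.log (c • y)) M := by
    refine (cfc_comp_smul c Real.log M ?_ hsa).symm
    refine Real.continuousOn_log.mono ?_
    rintro _ ⟨y, hy, rfl⟩
    simp only [Set.mem_compl_iff, Set.mem_singleton_iff, smul_eq_mul]
    exact (mul_pos hc (hsp y hy)).ne'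
  have h2 : cfc (fun y => Real.log (c • y)) M = cfc (fun y => Real.log c + Real.log y) M := by
    apply cfc_congr
    intro y hy
    simp only [smul_eq_mul]
    exact Real.log_mul hc.ne' (hsp y hy).ne'
  have hlogcont : ContinuousOn Real.log (spectrum ℝ M) :=
    Real.continuousOn_log.mono fun y hy => (hsp y hy).ne'
  rw [h1, h2, cfc_const_add (Real.log c) Real.log M hlogcont hsa,
    Algebra.algebraMap_eq_smul_one]

lemma conj_cancel {d : ℕ} (A Z : Matrix (Fin d) (Fin d) ℝ)
    (h1 : A⁻¹ * A = 1) (h2 : A * A⁻¹ = 1) : A⁻¹ * (A * Z * A) * A⁻¹ = Z := by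
  calc A⁻¹ * (A * Z * A) * A⁻¹ = (A⁻¹ * A) * Z * (A * A⁻¹) := by noncomm_ring
  _ = Z := by rw [h1, h2, one_mul, mul_one]

/-- Vect_{e^t p}(Log_{e^t p}(x)) = Vect_p(Log_p(x)) − t ν, where ν = Vect_p(p) has
entry 1 on each diagonal index (i,i) and 0 on the off-diagonal indices. -/
theorem vectP_logM_scaled_base (d : ℕ) (p x : Matrix (Fin d) (Fin d) ℝ)
    (hp : p.PosDef) (hx : x.PosDef) (t : ℝ) (hp' : (Real.exp t • p).PosDef) :
    ∀ q : Idx d,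
      VectP (Real.exp t • p) hp' (LogM (Real.exp t • p) hp' x) q =
        VectP p hp (LogM p hp x) q - t * (if q.1.1 = q.1.2 then 1 else 0) := by
  intro q
  set s := hp.posSemidef.sqrt with hs_def
  have hs_psd : s.PosSemidef := hp.posSemidef.posSemidef_sqrt
  have hss : s * s = p := hp.posSemidef.sqrt_mul_self
  have hdet : IsUnit s.det := by
    refine isUnit_iff_ne_zero.2 fun h => ?_
    have h2 : s.det * s.det = p.det := by rw [← det_mul, hss]
    rw [h, mul_zero] at h2
    exact hp.det_pos.ne' h2.symm
  set c := Real.exp (t / 2) with hc_def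
  have hc : 0 < c := Real.exp_pos _
  have hccc : c * c = Real.exp t := by rw [hc_def, ← Real.exp_add]; norm_num
  have hcs_psd : (c • s).PosSemidef := by
    exact hs_psd.smul hc.le
  have hsq : (c • s) ^ 2 = Real.exp t • p := by
    rw [pow_two, smul_mul_smul_comm, hccc, hss]
  have hsqrt' : hp'.posSemidef.sqrt = c • s :=
    (hcs_psd.eq_sqrt_of_sq_eq hp'.posSemidef hsq).symm
  have hs_inv : s⁻¹ * s = 1 := nonsing_inv_mul s hdet
  have hs_inv' : s * s⁻¹ = 1 := mul_nonsing_inv s hdet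
  have hcs_inv : (c • s)⁻¹ = c⁻¹ • s⁻¹ := by
    apply inv_eq_left_inv
    rw [smul_mul_smul_comm, inv_mul_cancel₀ hc.ne', hs_inv, one_smul]
  set M := s⁻¹ * x * s⁻¹ with hM_def
  have hsinv_herm : (s⁻¹).IsHermitian := hs_psd.1.inv
  have hMpd : M.PosDef := by
    have hdet' : IsUnit (s⁻¹).det := by
      rw [det_nonsing_inv]
      exact hdet.ringInverse
    have := posDef_conj hx hdet'
    rwa [hsinv_herm.eq] at this
  have hcinv : c⁻¹ * c⁻¹ = Real.exp (-t) := by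
    rw [hc_def, ← Real.exp_neg, ← Real.exp_add]; ring_nf
  have hmid : hp'.posSemidef.sqrt⁻¹ * x * hp'.posSemidef.sqrt⁻¹ = Real.exp (-t) • M := by
    rw [hsqrt', hcs_inv, hM_def, smul_mul_assoc, mul_smul_comm, smul_mul_assoc, smul_smul, hcinv]
  have h1' : hp'.posSemidef.sqrt⁻¹ * hp'.posSemidef.sqrt = 1 := by
    rw [hsqrt', hcs_inv, smul_mul_smul_comm, inv_mul_cancel₀ hc.ne', hs_inv, one_smul]
  have h2' : hp'.posSemidef.sqrt * hp'.posSemidef.sqrt⁻¹ = 1 := by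
    rw [hsqrt', hcs_inv, smul_mul_smul_comm, mul_inv_cancel₀ hc.ne', hs_inv', one_smul]
  have key' : hp'.posSemidef.sqrt⁻¹ * LogM (Real.exp t • p) hp' x * hp'.posSemidef.sqrt⁻¹
      = (-t) • (1 : Matrix (Fin d) (Fin d) ℝ) + mlog M := by
    rw [LogM, hmid, conj_cancel _ _ h1' h2', mlog_smul hMpd (Real.exp_pos _), Real.log_exp]
  have key : s⁻¹ * LogM p hp x * s⁻¹ = mlog M := by
    rw [LogM, ← hs_def, ← hM_def, conj_cancel _ _ hs_inv hs_inv']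
  simp only [VectP, key', ← hs_def, key, VectI, Matrix.add_apply, Matrix.smul_apply,
    Matrix.one_apply, smul_eq_mul]
  rcases q with ⟨⟨i, j⟩, hij⟩
  by_cases h : i = j <;> simp [h] <;> ring
end
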